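/- Let U be a finite set, S a nonempty subset of U^T, and p_t* the maximum entropy feedback defined by cardinality ratios. Then the sum over t of the conditional entropies H(U_t | U_{<t}) under the joint distribution q(u) = ∏_t p_t*(u_t | u_{<t}) equals log |S|. -/
import Mathlib


open Finset

variable {T : ℕ}

def pref {U : Type*} [DecidableEq U] (S : Finset (Fin T → U)) (u : Fin T → U) (t : ℕ) :
    Finset (Fin T → U) :=
  S.filter (fun v => ∀ i : Fin T, (i : ℕ) < t → v i = u i)

noncomputable def mef {U : Type*} [DecidableEq U] (S : Finset (Fin T → U)) (u : Fin T → U)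
    (t : ℕ) : ℝ :=
  ((pref S u (t + 1)).card : ℝ) / ((pref S u t).card : ℝ)

lemma pref_zero {U : Type*} [DecidableEq U] (S : Finset (Fin T → U)) (u : Fin T → U) :
    pref S u 0 = S := by
  simp [pref]

lemma mem_pref_self {U : Type*} [DecidableEq U] {S : Finset (Fin T → U)} {u : Fin T → U}
    (hu : u ∈ S) (t : ℕ) : u ∈ pref S u t := by
  simp [pref, hu]

lemma pref_top_of_mem {U : Type*} [DecidableEq U] {S : Finset (Fin T → U)} {u : Fin T → U}
    (hu : u ∈ S) : pref S u T = {u} := by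
  ext v
  simp only [pref, mem_filter, mem_singleton]
  constructor
  · rintro ⟨hv, h⟩
    funext i
    exact h i i.isLt
  · rintro rfl
    exact ⟨hu, fun _ _ => rfl⟩

lemma pref_top_of_notMem {U : Type*} [DecidableEq U] {S : Finset (Fin T → U)} {u : Fin T → U}
    (hu : u ∉ S) : pref S u T = ∅ := by
  ext v
  simp only [pref, mem_filter, Finset.notMem_empty, iff_false, not_and]
  intro hv h
  have : v = u := funext fun i => h i i.isLt
  exact hu (this ▸ hv)

lemma exists_drop (c : ℕ → ℕ) : ∀ (n : ℕ), c 0 ≠ 0 → c n = 0 →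
    ∃ t < n, c t ≠ 0 ∧ c (t + 1) = 0 := by
  intro n
  induction n with
  | zero => intro h h'; exact absurd h' h
  | succ m ih =>
    intro h h'
    by_cases hm : c m = 0
    · obtain ⟨t, ht, h1, h2⟩ := ih h hm
      exact ⟨t, ht.trans (Nat.lt_succ_self m), h1, h2⟩
    · exact ⟨m, Nat.lt_succ_self m, hm, h'⟩

lemma prod_mef_of_mem {U : Type*} [DecidableEq U] {S : Finset (Fin T → U)} {u : Fin T → U}
    (hu : u ∈ S) : ∏ s : Fin T, mef S u (s : ℕ) = 1 / (S.card : ℝ) := by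
  have hpos : ∀ t, (0 : ℝ) < ((pref S u t).card : ℝ) := fun t => by
    exact_mod_cast Finset.card_pos.mpr ⟨u, mem_pref_self hu t⟩
  rw [Fin.prod_univ_eq_prod_range]
  have key : ∀ n, ∏ s ∈ Finset.range n, mef S u s
      = ((pref S u n).card : ℝ) / ((pref S u 0).card : ℝ) := by
    intro n
    induction n with
    | zero => simp [div_self (hpos 0).ne']
    | succ m ih =>
      rw [Finset.prod_range_succ, ih, mef, div_mul_div_comm,
        mul_comm ((pref S u m).card : ℝ) ((pref S u (m+1)).card : ℝ),
        mul_comm ((pref S u 0).card : ℝ) ((pref S u m).card : ℝ), mul_comm,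
        mul_div_mul_left _ _ (hpos m).ne']
  rw [key T, pref_top_of_mem hu, pref_zero]
  simp

lemma prod_mef_of_notMem {U : Type*} [DecidableEq U] {S : Finset (Fin T → U)} {u : Fin T → U}
    (hS : S.Nonempty) (hu : u ∉ S) : ∏ s : Fin T, mef S u (s : ℕ) = 0 := by
  have h0 : (pref S u 0).card ≠ 0 := by
    rw [pref_zero]; exact Finset.card_ne_zero_of_mem hS.choose_spec
  have hT : (pref S u T).card = 0 := by
    rw [pref_top_of_notMem hu]; simp
  obtain ⟨t, htT, h1, h2⟩ := exists_drop (fun t => (pref S u t).card) T h0 hT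
  rw [Fin.prod_univ_eq_prod_range]
  refine Finset.prod_eq_zero (Finset.mem_range.mpr htT) ?_
  simp [mef, h2]

/-- The total conditional entropy of the maximum entropy feedback equals the system
capacity log |S|.  Each conditional entropy is written as the expectation, under the
joint distribution q(u) = ∏ₜ pₜ*(uₜ|u_{<t}), of -log pₜ*(uₜ|u_{<t}). -/
theorem mef_total_conditional_entropy (T : ℕ) (hT : 0 < T) (U : Type*) [Fintype U] [Nonempty U]
    [DecidableEq U] (S : Finset (Fin T → U)) (hS : S.Nonempty) :
    ∑ t : Fin T, ∑ u : Fin T → U,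
      (∏ s : Fin T, mef S u (s : ℕ)) * (-Real.log (mef S u (t : ℕ)))
      = Real.log (S.card : ℝ) := by
  have hScard : (0 : ℝ) < (S.card : ℝ) := by exact_mod_cast hS.card_pos
  rw [Finset.sum_comm]
  rw [← Finset.sum_subset (Finset.subset_univ S) (by
    intro u _ hu
    simp [prod_mef_of_notMem hS hu])]
  have hmain : ∀ u ∈ S, ∑ t : Fin T,
      (∏ s : Fin T, mef S u (s : ℕ)) * (-Real.log (mef S u (t : ℕ)))
      = (1 / (S.card : ℝ)) * Real.log (S.card : ℝ) := by
    intro u hu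
    have hpos : ∀ t, (0 : ℝ) < ((pref S u t).card : ℝ) := fun t => by
      exact_mod_cast Finset.card_pos.mpr ⟨u, mem_pref_self hu t⟩
    have hlog : ∑ t : Fin T, (-Real.log (mef S u (t : ℕ))) = Real.log (S.card : ℝ) := by
      rw [Fin.sum_univ_eq_sum_range (fun n => -Real.log (mef S u n)) T]
      have : ∀ t, -Real.log (mef S u t)
          = Real.log ((pref S u t).card : ℝ) - Real.log ((pref S u (t+1)).card : ℝ) := by
        intro t
        rw [mef, Real.log_div (hpos (t+1)).ne' (hpos t).ne']
        ring
      rw [Finset.sum_congr rfl (fun t _ => this t), Finset.sum_range_sub']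
      rw [pref_zero, pref_top_of_mem hu]
      simp
    calc ∑ t : Fin T, (∏ s : Fin T, mef S u (s : ℕ)) * (-Real.log (mef S u (t : ℕ)))
        = (∏ s : Fin T, mef S u (s : ℕ)) * ∑ t : Fin T, (-Real.log (mef S u (t : ℕ))) := by
          rw [Finset.mul_sum]
      _ = (1 / (S.card : ℝ)) * Real.log (S.card : ℝ) := by
          rw [prod_mef_of_mem hu, hlog]
  rw [Finset.sum_congr rfl hmain, Finset.sum_const, nsmul_eq_mul]
  field_simp
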